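/- Let C ⊆ 𝔽_q^n be a code with |C| ≥ 2. Then C is MDS (i.e., |C| = q^{n − d(C) + 1}) if and only if the balls B_w(c, M_w·(d(C) − 1)) for c ∈ C are pairwise disjoint and their union is all of 𝔽_q^n (i.e., C is perfect). -/

import Mathlib

set_option linter.unusedSectionVars false

open scoped Classical

noncomputable section

variable {F : Type*} [Field F] [Fintype F]

def IsWeight (w : F → ℕ) : Prop :=
  (∀ a : F, w a = 0 ↔ a = 0) ∧ (∀ a : F, w (-a) = w a) ∧
    (∀ a b : F, w (a + b) ≤ w a + w b)

def Mw (w : F → ℕ) : ℕ := Finset.univ.sup w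

def mw (w : F → ℕ) : ℕ := sInf {s | ∃ a : F, a ≠ 0 ∧ w a = s}

def rho {n : ℕ} (u : Fin n → F) : ℕ :=
  (Finset.univ.filter fun j => u j ≠ 0).sup fun j => (j : ℕ) + 1

lemma rho_le {n : ℕ} (u : Fin n → F) : rho u ≤ n :=
  Finset.sup_le fun j _ => j.isLt

def chainWeight {n : ℕ} (w : F → ℕ) (u : Fin n → F) : ℕ :=
  if h : rho u = 0 then 0
  else w (u ⟨rho u - 1,
        lt_of_lt_of_le (Nat.sub_lt (Nat.pos_of_ne_zero h) Nat.one_pos) (rho_le u)⟩)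
      + (rho u - 1) * Mw w

def dChain {n : ℕ} (w : F → ℕ) (u v : Fin n → F) : ℕ := chainWeight w (u - v)

def ballW {n : ℕ} (w : F → ℕ) (x : Fin n → F) (r : ℕ) : Finset (Fin n → F) :=
  Finset.univ.filter fun v => dChain w x v ≤ r

def diamW {n : ℕ} (w : F → ℕ) (A : Finset (Fin n → F)) : ℕ :=
  (A ×ˢ A).sup fun p => dChain w p.1 p.2

def AstarW (w : F → ℕ) (n D : ℕ) : ℕ :=
  Finset.univ.sup fun A : Finset (Fin n → F) => if diamW w A ≤ D then A.card else 0

def winv (w : F → ℕ) (S : ℕ) : Finset F :=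
  Finset.univ.filter fun a => a ≠ 0 ∧ w a ≤ S

def dP {n : ℕ} (C : Finset (Fin n → F)) : ℕ :=
  sInf {s | ∃ x ∈ C, ∃ y ∈ C, x ≠ y ∧ rho (x - y) = s}

def dW {n : ℕ} (w : F → ℕ) (C : Finset (Fin n → F)) : ℕ :=
  sInf {s | ∃ x ∈ C, ∃ y ∈ C, x ≠ y ∧ dChain w x y = s}

def floorW (w : F → ℕ) (n D : ℕ) : ℕ :=
  (Finset.univ.filter fun u : Fin n → F => chainWeight w u < D).sup (chainWeight w)

def nonArch (w : F → ℕ) : Prop := ∀ a b : F, w (a + b) ≤ max (w a) (w b)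

def Sw (w : F → ℕ) : ℕ :=
  if nonArch w then Mw w
  else sInf {s | ∃ a b : F, max (w a) (w b) < w (a - b) ∧ max (w a) (w b) = s}

def WwCond (w : F → ℕ) (S : ℕ) (K : Finset F) : Prop :=
  (∀ a ∈ K, Sw w ≤ w a ∧ w a ≤ S) ∧
  (∀ a ∈ K, ∀ b : F, w b ≤ Sw w - 1 → w (a - b) ≤ S) ∧
  (∀ a ∈ K, ∀ b ∈ K, w (a - b) ≤ S)

def WwCard (w : F → ℕ) (S : ℕ) : ℕ :=
  Finset.univ.sup fun K : Finset F => if WwCond w S K then K.card else 0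

def idealOf {n : ℕ} (P : PartialOrder (Fin n)) (u : Fin n → F) : Finset (Fin n) :=
  Finset.univ.filter fun j => ∃ i : Fin n, u i ≠ 0 ∧ P.le j i

def maxOf {n : ℕ} (P : PartialOrder (Fin n)) (u : Fin n → F) : Finset (Fin n) :=
  (idealOf P u).filter fun j => ∀ k ∈ idealOf P u, P.le j k → j = k

def posetWeight {n : ℕ} (P : PartialOrder (Fin n)) (w : F → ℕ) (u : Fin n → F) : ℕ :=
  (∑ i ∈ maxOf P u, w (u i)) + Mw w * ((idealOf P u) \ (maxOf P u)).card

def dPoset {n : ℕ} (P : PartialOrder (Fin n)) (w : F → ℕ) (u v : Fin n → F) : ℕ :=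
  posetWeight P w (u - v)

def ballP {n : ℕ} (P : PartialOrder (Fin n)) (w : F → ℕ) (x : Fin n → F) (r : ℕ) :
    Finset (Fin n → F) :=
  Finset.univ.filter fun v => dPoset P w x v ≤ r

def diamP {n : ℕ} (P : PartialOrder (Fin n)) (w : F → ℕ) (A : Finset (Fin n → F)) : ℕ :=
  (A ×ˢ A).sup fun p => dPoset P w p.1 p.2

end


section Helpers
variable {F : Type*} [Field F] [Fintype F]

lemma rho_le_iff' {n : ℕ} (u : Fin n → F) (r : ℕ) :
    rho u ≤ r ↔ ∀ j : Fin n, u j ≠ 0 → (j : ℕ) < r := by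
  unfold rho
  rw [Finset.sup_le_iff]
  constructor
  · intro h j hj
    have := h j (Finset.mem_filter.mpr ⟨Finset.mem_univ _, hj⟩)
    omega
  · intro h j hj
    have := h j (Finset.mem_filter.mp hj).2
    omega

lemma rho_eq_zero_iff' {n : ℕ} (u : Fin n → F) : rho u = 0 ↔ u = 0 := by
  rw [← Nat.le_zero, rho_le_iff']
  constructor
  · intro h; funext j; by_contra hj; exact absurd (h j hj) (by omega)
  · intro h j hj; exact absurd (congrFun h j) hj

lemma rho_sub_le' {n : ℕ} (x y : Fin n → F) : rho (x - y) ≤ max (rho x) (rho y) := by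
  rw [rho_le_iff']
  intro j hj
  have hor : x j ≠ 0 ∨ y j ≠ 0 := by
    by_contra h; push_neg at h
    apply hj; simp [Pi.sub_apply, h.1, h.2]
  rcases hor with h | h
  · have : (j:ℕ) + 1 ≤ rho x :=
      Finset.le_sup (f := fun j : Fin n => (j:ℕ)+1)
        (Finset.mem_filter.mpr ⟨Finset.mem_univ _, h⟩)
    omega
  · have : (j:ℕ) + 1 ≤ rho y :=
      Finset.le_sup (f := fun j : Fin n => (j:ℕ)+1)
        (Finset.mem_filter.mpr ⟨Finset.mem_univ _, h⟩)
    omega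

lemma Mw_pos' (w : F → ℕ) (hw : IsWeight w) : 1 ≤ Mw w := by
  have h1 : w 1 ≠ 0 := fun h0 => one_ne_zero ((hw.1 1).mp h0)
  have : w 1 ≤ Mw w := Finset.le_sup (Finset.mem_univ 1)
  omega

lemma chainWeight_le_iff' {n : ℕ} (w : F → ℕ) (hw : IsWeight w) (u : Fin n → F) (r : ℕ) :
    chainWeight w u ≤ Mw w * r ↔ rho u ≤ r := by
  unfold chainWeight
  by_cases h : rho u = 0
  · simp [h]
  · rw [dif_neg h]
    have hne : (Finset.univ.filter fun j => u j ≠ 0).Nonempty := by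
      rw [Finset.filter_nonempty_iff]
      by_contra hc; push_neg at hc
      apply h
      rw [rho_eq_zero_iff']
      funext j; exact hc j (Finset.mem_univ j)
    obtain ⟨j, hjmem, hje⟩ := Finset.exists_mem_eq_sup _ hne fun j : Fin n => (j:ℕ) + 1
    have hje' : rho u = (j : ℕ) + 1 := hje
    have hjne : u j ≠ 0 := (Finset.mem_filter.mp hjmem).2
    have htop : u ⟨rho u - 1, lt_of_lt_of_le (Nat.sub_lt (Nat.pos_of_ne_zero h) Nat.one_pos)
        (rho_le u)⟩ = u j := by
      congr 1
      apply Fin.ext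
      simp [hje']
    rw [htop]
    have hw1 : 1 ≤ w (u j) := by
      have h0 : w (u j) ≠ 0 := fun h0 => hjne ((hw.1 _).mp h0)
      omega
    have hw2 : w (u j) ≤ Mw w := Finset.le_sup (Finset.mem_univ _)
    have hM : 1 ≤ Mw w := Mw_pos' w hw
    constructor
    · intro hle
      have hlt : (rho u - 1) * Mw w < r * Mw w := by
        calc (rho u - 1) * Mw w < w (u j) + (rho u - 1) * Mw w := by omega
          _ ≤ Mw w * r := hle
          _ = r * Mw w := Nat.mul_comm _ _
      have := Nat.lt_of_mul_lt_mul_right hlt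
      omega
    · intro hle
      calc w (u j) + (rho u - 1) * Mw w ≤ Mw w + (rho u - 1) * Mw w := by omega
        _ = (1 + (rho u - 1)) * Mw w := by ring
        _ = rho u * Mw w := by congr 1; omega
        _ ≤ r * Mw w := Nat.mul_le_mul_right _ hle
        _ = Mw w * r := Nat.mul_comm _ _

lemma card_rho_le' {n : ℕ} (r : ℕ) (hr : r ≤ n) :
    (Finset.univ.filter fun u : Fin n → F => rho u ≤ r).card = Fintype.card F ^ r := by
  have himg : (Finset.univ.filter fun u : Fin n → F => rho u ≤ r) =
      Finset.image (fun g : Fin r → F => fun j : Fin n => if h : (j:ℕ) < r then g ⟨j, h⟩ else 0)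
        Finset.univ := by
    ext u
    simp only [Finset.mem_filter, Finset.mem_univ, true_and, Finset.mem_image]
    rw [rho_le_iff']
    constructor
    · intro h
      refine ⟨fun i => u ⟨i, lt_of_lt_of_le i.isLt hr⟩, ?_⟩
      funext j
      by_cases hj : (j:ℕ) < r
      · simp only [dif_pos hj]
      · simp only [dif_neg hj]
        by_contra hne'
        exact hj (h j fun e => hne' e.symm)
    · rintro ⟨g, rfl⟩
      intro j hj
      by_contra hjr
      simp only [dif_neg hjr] at hj
      exact hj rfl
  have hinj : Function.Injective
      (fun g : Fin r → F => fun j : Fin n => if h : (j:ℕ) < r then g ⟨j, h⟩ else 0) := by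
    intro g g' he
    funext i
    have h2 := congrFun he ⟨i, lt_of_lt_of_le i.isLt hr⟩
    simpa [i.isLt] using h2
  rw [himg, Finset.card_image_of_injective _ hinj, Finset.card_univ, Fintype.card_fun,
    Fintype.card_fin]

lemma card_ballW' {n : ℕ} (w : F → ℕ) (hw : IsWeight w) (x : Fin n → F) (r : ℕ) (hr : r ≤ n) :
    (ballW w x (Mw w * r)).card = Fintype.card F ^ r := by
  rw [← card_rho_le' r hr]
  apply Finset.card_bij (fun v _ => x - v)
  · intro v hv
    simp only [ballW, dChain, Finset.mem_filter, Finset.mem_univ, true_and] at hv ⊢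
    exact (chainWeight_le_iff' w hw _ r).mp (Finset.mem_filter.mp hv).2
  · intro a _ b _ hab
    exact sub_right_injective hab
  · intro u hu
    simp only [ballW, dChain, Finset.mem_filter, Finset.mem_univ, true_and] at hu ⊢
    refine ⟨x - u, ?_, by abel⟩
    refine Finset.mem_filter.mpr ⟨Finset.mem_univ _, ?_⟩
    show chainWeight w (x - (x - u)) ≤ Mw w * r
    rw [sub_sub_cancel]
    exact (chainWeight_le_iff' w hw _ r).mpr hu

end Helpers

theorem stmt4 {F : Type*} [Field F] [Fintype F] {n : ℕ} (hn : 1 ≤ n)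
    (w : F → ℕ) (hw : IsWeight w) (C : Finset (Fin n → F)) (hC : 2 ≤ C.card) :
    C.card = Fintype.card F ^ (n - dP C + 1) ↔
      ((∀ c ∈ C, ∀ c' ∈ C, c ≠ c' →
          Disjoint (ballW w c (Mw w * (dP C - 1))) (ballW w c' (Mw w * (dP C - 1)))) ∧
        (∀ v : Fin n → F, ∃ c ∈ C, v ∈ ballW w c (Mw w * (dP C - 1)))) := by
  classical
  obtain ⟨x1, hx1, y1, hy1, hxy1⟩ := Finset.one_lt_card.mp (by omega : 1 < C.card)
  have hSne : {s | ∃ x ∈ C, ∃ y ∈ C, x ≠ y ∧ rho (x - y) = s}.Nonempty :=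
    ⟨rho (x1 - y1), x1, hx1, y1, hy1, hxy1, rfl⟩
  have hdmem : dP C ∈ {s | ∃ x ∈ C, ∃ y ∈ C, x ≠ y ∧ rho (x - y) = s} := by
    unfold dP; exact Nat.sInf_mem hSne
  obtain ⟨x0, hx0, y0, hy0, hxy0, hrho0⟩ := hdmem
  have hd1 : 1 ≤ dP C := by
    rcases Nat.eq_zero_or_pos (dP C) with h0 | h; swap; · exact h
    exfalso
    exact hxy0 (sub_eq_zero.mp ((rho_eq_zero_iff' _).mp (hrho0.trans h0)))
  have hdn : dP C ≤ n := hrho0 ▸ rho_le _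
  have hdle : ∀ x ∈ C, ∀ y ∈ C, x ≠ y → dP C ≤ rho (x - y) := by
    intro x hx y hy hxy
    exact Nat.sInf_le ⟨x, hx, y, hy, hxy, rfl⟩
  have hdisj : ∀ c ∈ C, ∀ c' ∈ C, c ≠ c' →
      Disjoint (ballW w c (Mw w * (dP C - 1))) (ballW w c' (Mw w * (dP C - 1))) := by
    intro c hc c' hc' hne
    rw [Finset.disjoint_left]
    intro v hv hv'
    simp only [ballW, dChain, Finset.mem_filter, Finset.mem_univ, true_and] at hv hv'
    have h1 : rho (c - v) ≤ dP C - 1 := (chainWeight_le_iff' w hw _ _).mp (Finset.mem_filter.mp hv).2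
    have h2 : rho (c' - v) ≤ dP C - 1 := (chainWeight_le_iff' w hw _ _).mp (Finset.mem_filter.mp hv').2
    have h3 : rho (c - c') ≤ dP C - 1 := by
      have he : c - c' = (c - v) - (c' - v) := by abel
      rw [he]
      exact le_trans (rho_sub_le' _ _) (max_le h1 h2)
    have h4 := hdle c hc c' hc' hne
    omega
  have hq : 0 < Fintype.card F := Fintype.card_pos
  have hcardB : ∀ c : Fin n → F,
      (ballW w c (Mw w * (dP C - 1))).card = Fintype.card F ^ (dP C - 1) :=
    fun c => card_ballW' w hw c (dP C - 1) (by omega)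
  have hUcard : (C.biUnion fun c => ballW w c (Mw w * (dP C - 1))).card
      = C.card * Fintype.card F ^ (dP C - 1) := by
    rw [Finset.card_biUnion hdisj, Finset.sum_congr rfl fun c _ => hcardB c,
      Finset.sum_const, smul_eq_mul]
  have hcardfun : Fintype.card (Fin n → F) = Fintype.card F ^ n := by
    rw [Fintype.card_fun, Fintype.card_fin]
  constructor
  · intro hmds
    refine ⟨hdisj, ?_⟩
    have hc1 : (C.biUnion fun c => ballW w c (Mw w * (dP C - 1))).card
        = Fintype.card (Fin n → F) := by
      rw [hUcard, hmds, ← pow_add, hcardfun]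
      congr 1
      omega
    have huniv : (C.biUnion fun c => ballW w c (Mw w * (dP C - 1))) = Finset.univ :=
      Finset.eq_univ_of_card _ hc1
    intro v
    have hv : v ∈ C.biUnion fun c => ballW w c (Mw w * (dP C - 1)) :=
      huniv ▸ Finset.mem_univ v
    exact Finset.mem_biUnion.mp hv
  · rintro ⟨-, hcov⟩
    have huniv : (C.biUnion fun c => ballW w c (Mw w * (dP C - 1))) = Finset.univ := by
      apply Finset.eq_univ_iff_forall.mpr
      intro v
      obtain ⟨c, hc, hv⟩ := hcov v
      exact Finset.mem_biUnion.mpr ⟨c, hc, hv⟩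
    have hcards : C.card * Fintype.card F ^ (dP C - 1) = Fintype.card F ^ n := by
      rw [← hUcard, huniv, Finset.card_univ, hcardfun]
    have hsplit : Fintype.card F ^ n
        = Fintype.card F ^ (n - dP C + 1) * Fintype.card F ^ (dP C - 1) := by
      rw [← pow_add]
      congr 1
      omega
    exact Nat.eq_of_mul_eq_mul_right (pow_pos hq _) (hcards.trans hsplit)
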